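/- A sequent is derivable in L^∘ if and only if it is derivable in the modified calculus L^∘_2, which is obtained from L^∘ by adding the rules (/→)_2: from Γ,E,Δ→C, Π→D and Ψ→A infer Γ,Π,(D\E)/A,Ψ,Δ→C; (→/)_2: from D,Π,A→E infer Π→(D\E)/A; (·→)_2: from Γ,D,E,B,Δ→C infer Γ,(D·E)·B,Δ→C; (→·)_2: from Π→D, Ψ→E and Ξ→B infer Π,Ψ,Ξ→(D·E)·B, and by forbidding: applications of (/→) whose principal type B/A has B of the form D\E; applications of (→·) producing A·B with A of the form D·E; applications of (→/) producing B/A with B of the form D\E; and applications of (·→) on a type A·B with A of the form D·E. -/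

import Mathlib

/-- Types of the Lambek calculus with the cyclic shift `L^∘`, built from
primitive types `P` by `\` (`ldiv A B = A \ B`), `/` (`rdiv B A = B / A`),
`·` (`mul`) and the cyclic shift `^∘` (`circ`). -/
inductive Fm (P : Type) : Type
  | prim : P → Fm P
  | ldiv : Fm P → Fm P → Fm P
  | rdiv : Fm P → Fm P → Fm P
  | mul  : Fm P → Fm P → Fm P
  | circ : Fm P → Fm P
deriving DecidableEq

open Fm

/-- Derivability of sequents in the Lambek calculus with the cyclic shift `L^∘`.
The Boolean flag indicates whether the rule (cut) may be used:
`Dv P true` is `L^∘` (with cut), `Dv P false` is its cut-free part. -/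
inductive Dv (P : Type) : Bool → List (Fm P) → Fm P → Prop
  | ax (c : Bool) (A : Fm P) :
      Dv P c [A] A
  | ldivL (c : Bool) (Γ Δ Pi : List (Fm P)) (A B C : Fm P) :
      Dv P c (Γ ++ B :: Δ) C → Dv P c Pi A → Pi ≠ [] →
      Dv P c (Γ ++ Pi ++ ldiv A B :: Δ) C
  | ldivR (c : Bool) (Pi : List (Fm P)) (A B : Fm P) :
      Dv P c (A :: Pi) B → Pi ≠ [] →
      Dv P c Pi (ldiv A B)
  | rdivL (c : Bool) (Γ Δ Pi : List (Fm P)) (A B C : Fm P) :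
      Dv P c (Γ ++ B :: Δ) C → Dv P c Pi A → Pi ≠ [] →
      Dv P c (Γ ++ rdiv B A :: (Pi ++ Δ)) C
  | rdivR (c : Bool) (Pi : List (Fm P)) (A B : Fm P) :
      Dv P c (Pi ++ [A]) B → Pi ≠ [] →
      Dv P c Pi (rdiv B A)
  | mulL (c : Bool) (Γ Δ : List (Fm P)) (A B C : Fm P) :
      Dv P c (Γ ++ A :: B :: Δ) C →
      Dv P c (Γ ++ mul A B :: Δ) C
  | mulR (c : Bool) (Pi Psi : List (Fm P)) (A B : Fm P) :
      Dv P c Pi A → Dv P c Psi B → Pi ≠ [] → Psi ≠ [] →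
      Dv P c (Pi ++ Psi) (mul A B)
  | circR (c : Bool) (Pi : List (Fm P)) (A : Fm P) :
      Dv P c Pi A →
      Dv P c Pi (circ A)
  | circL (c : Bool) (A B : Fm P) :
      Dv P c [B] (circ A) →
      Dv P c [circ B] (circ A)
  | circC (c : Bool) (Pi Psi : List (Fm P)) (A : Fm P) :
      Dv P c (Pi ++ Psi) (circ A) → Pi ≠ [] → Psi ≠ [] →
      Dv P c (Psi ++ Pi) (circ A)
  | cut (Γ Δ Pi : List (Fm P)) (A B : Fm P) :
      Dv P true Pi A → Dv P true (Γ ++ A :: Δ) B → Pi ≠ [] →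
      Dv P true (Γ ++ Pi ++ Δ) B

/-- The modified calculus `L^∘_2`: `L^∘` with the doubled rules `(/→)_2`,
`(→/)_2`, `(·→)_2`, `(→·)_2` added, and with applications of `(/→)` and
`(→/)` whose principal type `B/A` has `B` of the form `D\E`, as well as
applications of `(·→)` and `(→·)` whose principal type `A·B` has `A` of the
form `D·E`, forbidden. -/
inductive Dv2 (P : Type) : List (Fm P) → Fm P → Prop
  | ax (A : Fm P) :
      Dv2 P [A] A
  | ldivL (Γ Δ Pi : List (Fm P)) (A B C : Fm P) :
      Dv2 P (Γ ++ B :: Δ) C → Dv2 P Pi A → Pi ≠ [] →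
      Dv2 P (Γ ++ Pi ++ Fm.ldiv A B :: Δ) C
  | ldivR (Pi : List (Fm P)) (A B : Fm P) :
      Dv2 P (A :: Pi) B → Pi ≠ [] →
      Dv2 P Pi (Fm.ldiv A B)
  | rdivL (Γ Δ Pi : List (Fm P)) (A B C : Fm P) :
      (∀ D E : Fm P, B ≠ Fm.ldiv D E) →
      Dv2 P (Γ ++ B :: Δ) C → Dv2 P Pi A → Pi ≠ [] →
      Dv2 P (Γ ++ Fm.rdiv B A :: (Pi ++ Δ)) C
  | rdivR (Pi : List (Fm P)) (A B : Fm P) :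
      (∀ D E : Fm P, B ≠ Fm.ldiv D E) →
      Dv2 P (Pi ++ [A]) B → Pi ≠ [] →
      Dv2 P Pi (Fm.rdiv B A)
  | mulL (Γ Δ : List (Fm P)) (A B C : Fm P) :
      (∀ D E : Fm P, A ≠ Fm.mul D E) →
      Dv2 P (Γ ++ A :: B :: Δ) C →
      Dv2 P (Γ ++ Fm.mul A B :: Δ) C
  | mulR (Pi Psi : List (Fm P)) (A B : Fm P) :
      (∀ D E : Fm P, A ≠ Fm.mul D E) →
      Dv2 P Pi A → Dv2 P Psi B → Pi ≠ [] → Psi ≠ [] →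
      Dv2 P (Pi ++ Psi) (Fm.mul A B)
  | rdivL2 (Γ Δ Pi Psi : List (Fm P)) (D E A C : Fm P) :
      Dv2 P (Γ ++ E :: Δ) C → Dv2 P Pi D → Dv2 P Psi A → Pi ≠ [] → Psi ≠ [] →
      Dv2 P (Γ ++ Pi ++ Fm.rdiv (Fm.ldiv D E) A :: (Psi ++ Δ)) C
  | rdivR2 (Pi : List (Fm P)) (D E A : Fm P) :
      Dv2 P (D :: (Pi ++ [A])) E → Pi ≠ [] →
      Dv2 P Pi (Fm.rdiv (Fm.ldiv D E) A)
  | mulL2 (Γ Δ : List (Fm P)) (D E B C : Fm P) :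
      Dv2 P (Γ ++ D :: E :: B :: Δ) C →
      Dv2 P (Γ ++ Fm.mul (Fm.mul D E) B :: Δ) C
  | mulR2 (Pi Psi Xi : List (Fm P)) (D E B : Fm P) :
      Dv2 P Pi D → Dv2 P Psi E → Dv2 P Xi B → Pi ≠ [] → Psi ≠ [] → Xi ≠ [] →
      Dv2 P (Pi ++ Psi ++ Xi) (Fm.mul (Fm.mul D E) B)
  | circR (Pi : List (Fm P)) (A : Fm P) :
      Dv2 P Pi A →
      Dv2 P Pi (Fm.circ A)
  | circL (A B : Fm P) :
      Dv2 P [B] (Fm.circ A) →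
      Dv2 P [Fm.circ B] (Fm.circ A)
  | circC (Pi Psi : List (Fm P)) (A : Fm P) :
      Dv2 P (Pi ++ Psi) (Fm.circ A) → Pi ≠ [] → Psi ≠ [] →
      Dv2 P (Psi ++ Pi) (Fm.circ A)
  | cut (Γ Δ Pi : List (Fm P)) (A B : Fm P) :
      Dv2 P Pi A → Dv2 P (Γ ++ A :: Δ) B → Pi ≠ [] →
      Dv2 P (Γ ++ Pi ++ Δ) B

namespace LcircAux

variable {P : Type}

/-- For `A` not a product, both the sequent `A, E → A·E` and the unrestricted
`(·→)` rule on `A·B` are available directly. -/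
theorem mul_nonmul (A : Fm P) (hA : ∀ D E, A ≠ Fm.mul D E) :
    (∀ E, Dv2 P [A, E] (Fm.mul A E)) ∧
    (∀ B Γ Δ C, Dv2 P (Γ ++ A :: B :: Δ) C → Dv2 P (Γ ++ Fm.mul A B :: Δ) C) :=
  ⟨fun E => by
    simpa using Dv2.mulR [A] [E] A E hA (Dv2.ax A) (Dv2.ax E) (by simp) (by simp),
   fun B Γ Δ C h => Dv2.mulL Γ Δ A B C hA h⟩

/-- Simultaneously: `D, E → D·E` is derivable in `L^∘_2`, and the unrestricted
`(·→)` rule is admissible in `L^∘_2`. -/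
theorem mul_key (D : Fm P) :
    (∀ E, Dv2 P [D, E] (Fm.mul D E)) ∧
    (∀ B Γ Δ C, Dv2 P (Γ ++ D :: B :: Δ) C → Dv2 P (Γ ++ Fm.mul D B :: Δ) C) := by
  induction D with
  | prim p => exact mul_nonmul _ (fun _ _ h => nomatch h)
  | ldiv a b _ _ => exact mul_nonmul _ (fun _ _ h => nomatch h)
  | rdiv a b _ _ => exact mul_nonmul _ (fun _ _ h => nomatch h)
  | circ a _ => exact mul_nonmul _ (fun _ _ h => nomatch h)
  | mul D1 D2 ih1 _ =>
    constructor
    · intro E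
      have h1 : Dv2 P ([D1] ++ [D2] ++ [E]) (Fm.mul (Fm.mul D1 D2) E) :=
        Dv2.mulR2 [D1] [D2] [E] D1 D2 E (Dv2.ax D1) (Dv2.ax D2) (Dv2.ax E)
          (by simp) (by simp) (by simp)
      have h2 : Dv2 P ([] ++ D1 :: D2 :: [E]) (Fm.mul (Fm.mul D1 D2) E) := by
        simpa using h1
      have h3 := ih1.2 D2 [] [E] _ h2
      simpa using h3
    · intro B Γ Δ C h
      have hc := Dv2.cut Γ (B :: Δ) [D1, D2] (Fm.mul D1 D2) C (ih1.1 D2) h (by simp)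
      have h2 : Dv2 P (Γ ++ D1 :: D2 :: B :: Δ) C := by simpa using hc
      exact Dv2.mulL2 Γ Δ D1 D2 B C h2

/-- The unrestricted `(→·)` rule is admissible in `L^∘_2`. -/
theorem genMulR (Pi Psi : List (Fm P)) (A B : Fm P)
    (hA : Dv2 P Pi A) (hB : Dv2 P Psi B) (h1 : Pi ≠ []) (h2 : Psi ≠ []) :
    Dv2 P (Pi ++ Psi) (Fm.mul A B) := by
  have base := (mul_key A).1 B
  have c1 := Dv2.cut [] [B] Pi A (Fm.mul A B) hA (by simpa using base) h1
  have c1' : Dv2 P (Pi ++ B :: []) (Fm.mul A B) := by simpa using c1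
  have c2 := Dv2.cut Pi [] Psi B (Fm.mul A B) hB c1' h2
  simpa using c2

/-- `B/A, Π → B` is derivable in `L^∘_2` whenever `Π → A` is. -/
theorem rdivSeq (B A : Fm P) (Pi : List (Fm P)) (hA : Dv2 P Pi A) (h1 : Pi ≠ []) :
    Dv2 P (Fm.rdiv B A :: Pi) B := by
  by_cases hB : ∃ D E, B = Fm.ldiv D E
  · obtain ⟨D, E, rfl⟩ := hB
    have h2 := Dv2.rdivL2 [] [] [D] Pi D E A E (Dv2.ax E) (Dv2.ax D) hA (by simp) h1
    have h3 : Dv2 P (D :: (Fm.rdiv (Fm.ldiv D E) A :: Pi)) E := by simpa using h2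
    exact Dv2.ldivR _ D E h3 (by simp)
  · have hB' : ∀ D E, B ≠ Fm.ldiv D E := by push_neg at hB; exact hB
    simpa using Dv2.rdivL [] [] Pi A B B hB' (Dv2.ax B) hA h1

/-- The unrestricted `(/→)` rule is admissible in `L^∘_2`. -/
theorem genRdivL (Γ Δ Pi : List (Fm P)) (A B C : Fm P)
    (h : Dv2 P (Γ ++ B :: Δ) C) (hA : Dv2 P Pi A) (h1 : Pi ≠ []) :
    Dv2 P (Γ ++ Fm.rdiv B A :: (Pi ++ Δ)) C := by
  have hc := Dv2.cut Γ Δ (Fm.rdiv B A :: Pi) B C (rdivSeq B A Pi hA h1) h (by simp)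
  simpa [List.append_assoc] using hc

/-- The unrestricted `(→/)` rule is admissible in `L^∘_2`. -/
theorem genRdivR (Pi : List (Fm P)) (A B : Fm P)
    (h : Dv2 P (Pi ++ [A]) B) (h1 : Pi ≠ []) : Dv2 P Pi (Fm.rdiv B A) := by
  by_cases hB : ∃ D E, B = Fm.ldiv D E
  · obtain ⟨D, E, rfl⟩ := hB
    have hDE : Dv2 P ([D] ++ Fm.ldiv D E :: []) E := by
      simpa using Dv2.ldivL [] [] [D] D E E (Dv2.ax E) (Dv2.ax D) (by simp)
    have hc := Dv2.cut [D] [] (Pi ++ [A]) (Fm.ldiv D E) E h hDE (by simp)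
    have h3 : Dv2 P (D :: (Pi ++ [A])) E := by simpa using hc
    exact Dv2.rdivR2 Pi D E A h3 h1
  · have hB' : ∀ D E, B ≠ Fm.ldiv D E := by push_neg at hB; exact hB
    exact Dv2.rdivR Pi A B hB' h h1

theorem dv_to_dv2 (c : Bool) (Γ : List (Fm P)) (B : Fm P) (h : Dv P c Γ B) :
    Dv2 P Γ B := by
  induction h with
  | ax c A => exact Dv2.ax A
  | ldivL c Γ Δ Pi A B C _ _ hne ih1 ih2 => exact Dv2.ldivL Γ Δ Pi A B C ih1 ih2 hne
  | ldivR c Pi A B _ hne ih => exact Dv2.ldivR Pi A B ih hne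
  | rdivL c Γ Δ Pi A B C _ _ hne ih1 ih2 => exact genRdivL Γ Δ Pi A B C ih1 ih2 hne
  | rdivR c Pi A B _ hne ih => exact genRdivR Pi A B ih hne
  | mulL c Γ Δ A B C _ ih => exact (mul_key A).2 B Γ Δ C ih
  | mulR c Pi Psi A B _ _ h1 h2 ih1 ih2 => exact genMulR Pi Psi A B ih1 ih2 h1 h2
  | circR c Pi A _ ih => exact Dv2.circR Pi A ih
  | circL c A B _ ih => exact Dv2.circL A B ih
  | circC c Pi Psi A _ h1 h2 ih => exact Dv2.circC Pi Psi A ih h1 h2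
  | cut Γ Δ Pi A B _ _ hne ih1 ih2 => exact Dv2.cut Γ Δ Pi A B ih1 ih2 hne

theorem dv2_to_dv (Γ : List (Fm P)) (B : Fm P) (h : Dv2 P Γ B) :
    Dv P true Γ B := by
  induction h with
  | ax A => exact Dv.ax true A
  | ldivL Γ Δ Pi A B C _ _ hne ih1 ih2 => exact Dv.ldivL true Γ Δ Pi A B C ih1 ih2 hne
  | ldivR Pi A B _ hne ih => exact Dv.ldivR true Pi A B ih hne
  | rdivL Γ Δ Pi A B C _ _ _ hne ih1 ih2 => exact Dv.rdivL true Γ Δ Pi A B C ih1 ih2 hne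
  | rdivR Pi A B _ _ hne ih => exact Dv.rdivR true Pi A B ih hne
  | mulL Γ Δ A B C _ _ ih => exact Dv.mulL true Γ Δ A B C ih
  | mulR Pi Psi A B _ _ _ h1 h2 ih1 ih2 => exact Dv.mulR true Pi Psi A B ih1 ih2 h1 h2
  | rdivL2 Γ Δ Pi Psi D E A C _ _ _ hp hps ih1 ih2 ih3 =>
    have h1 := Dv.ldivL true Γ Δ Pi D E C ih1 ih2 hp
    have h2 := Dv.rdivL true (Γ ++ Pi) Δ Psi A (Fm.ldiv D E) C
      (by simpa [List.append_assoc] using h1) ih3 hps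
    simpa [List.append_assoc] using h2
  | rdivR2 Pi D E A _ hp ih =>
    have h1 := Dv.ldivR true (Pi ++ [A]) D E ih (by simp)
    exact Dv.rdivR true Pi A (Fm.ldiv D E) h1 hp
  | mulL2 Γ Δ D E B C _ ih =>
    have h1 := Dv.mulL true Γ (B :: Δ) D E C ih
    exact Dv.mulL true Γ Δ (Fm.mul D E) B C h1
  | mulR2 Pi Psi Xi D E B _ _ _ h1 h2 h3 ih1 ih2 ih3 =>
    have hDE := Dv.mulR true Pi Psi D E ih1 ih2 h1 h2
    have hPP : Pi ++ Psi ≠ [] := fun hc => h1 (List.append_eq_nil_iff.mp hc).1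
    have := Dv.mulR true (Pi ++ Psi) Xi (Fm.mul D E) B hDE ih3 hPP h3
    simpa [List.append_assoc] using this
  | circR Pi A _ ih => exact Dv.circR true Pi A ih
  | circL A B _ ih => exact Dv.circL true A B ih
  | circC Pi Psi A _ h1 h2 ih => exact Dv.circC true Pi Psi A ih h1 h2
  | cut Γ Δ Pi A B _ _ hne ih1 ih2 => exact Dv.cut Γ Δ Pi A B ih1 ih2 hne

end LcircAux

/-- A sequent is derivable in `L^∘` iff it is derivable in the modified
calculus `L^∘_2`. -/
theorem Lcirc_iff_Lcirc2 (P : Type) (Γ : List (Fm P)) (B : Fm P) :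
    Dv P true Γ B ↔ Dv2 P Γ B :=
  ⟨LcircAux.dv_to_dv2 true Γ B, LcircAux.dv2_to_dv Γ B⟩
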